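/- Let ρ = (G_i)_{0 ≤ i ≤ n} be a 1-balanced execution of the reconfigurable broadcast network defined by a broadcast protocol P, and let κ = κ(ρ) be its total number of repeated atomic reconfigurations. Then for every N ∈ ℕ there exists a 1-constrained execution from G_1^N ⊕ G_{n−1}^{κN} to G_n^{N + κN}. -/

import Mathlib

/-!
Reconfigurable broadcast networks (Maubert–Pinchinat–Schlehuber-Caissier style
formalization of "Reconfiguration and message losses in parameterized broadcast networks").

A broadcast protocol is a tuple (Q, I, Σ, Δ); configurations are finite
Q-labelled simple graphs; steps are reconfiguration steps (labels unchanged,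
edges arbitrary) or communication steps (edges unchanged, one node broadcasts,
its neighbours receive); executions strictly alternate the two kinds of steps.
-/

namespace RBN

/-- An action of a broadcast protocol: broadcast `!!m` or reception `??m`. -/
inductive BAct (M : Type) where
  | brd : M → BAct M
  | rcv : M → BAct M

/-- A broadcast protocol `(Q, I, Σ, Δ)` with state space `Q` and message alphabet `M`:
initial states `init ⊆ Q` and transition relation `trans ⊆ Q × BAct M × Q`. -/
structure BroadcastProtocol (Q M : Type) where
  init : Set Q
  trans : Q → BAct M → Q → Prop

/-- A configuration: an undirected graph without self-loops on node set `V`,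
whose nodes are labelled by states in `Q`. -/
structure Config (V Q : Type) where
  graph : SimpleGraph V
  label : V → Q

/-- The distance `d(G, G')` between two configurations on the same node set with
the same labelling: the number of edges in the symmetric difference of the edge sets. -/
noncomputable def dist {V Q : Type} (G G' : Config V Q) : ℕ :=
  (symmDiff G.graph.edgeSet G'.graph.edgeSet).ncard

/-- The number of edges incident to node `v` in the symmetric difference of
the edge sets of `G` and `G'`. -/
noncomputable def localDist {V Q : Type} (v : V) (G G' : Config V Q) : ℕ :=
  {e ∈ symmDiff G.graph.edgeSet G'.graph.edgeSet | v ∈ e}.ncard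

/-- A reconfiguration step: labels are unchanged and edges may change arbitrarily. -/
def ReconfStep {V Q : Type} (G G' : Config V Q) : Prop :=
  G'.label = G.label

/-- A communication step: edges are unchanged, some node `v` broadcasts a message `m`
(performing a transition `(L v, !!m, L' v) ∈ Δ`), every neighbour `u` of `v` receives it
(performing `(L u, ??m, L' u) ∈ Δ`), and every other node keeps its label. -/
def CommStep {V Q M : Type} (P : BroadcastProtocol Q M) (G G' : Config V Q) : Prop :=
  G'.graph = G.graph ∧
  ∃ (v : V) (m : M),
    P.trans (G.label v) (.brd m) (G'.label v) ∧
    (∀ u, G.graph.Adj v u → P.trans (G.label u) (.rcv m) (G'.label u)) ∧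
    (∀ u, u ≠ v → ¬ G.graph.Adj v u → G'.label u = G.label u)

/-- The type of a step: communication or reconfiguration. -/
inductive StepType where
  | comm : StepType
  | reconf : StepType
deriving DecidableEq

/-- An execution of length `r` of the reconfigurable broadcast network defined by `P`,
with node set `V`: a sequence of configurations `cfg 0, …, cfg r` together with a
classification `ty` of each step, such that each step is of its declared kind and
communication and reconfiguration steps strictly alternate (reconfiguration steps
may be trivial). -/
structure Execution {Q M : Type} (V : Type) (P : BroadcastProtocol Q M) (r : ℕ) where
  cfg : ℕ → Config V Q
  ty : ℕ → StepType
  step_comm : ∀ i < r, ty i = .comm → CommStep P (cfg i) (cfg (i + 1))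
  step_reconf : ∀ i < r, ty i = .reconf → ReconfStep (cfg i) (cfg (i + 1))
  alternate : ∀ i, i + 1 < r → ty (i + 1) ≠ ty i

variable {Q M V : Type} {P : BroadcastProtocol Q M} {r : ℕ}

/-- An execution is initial if every node of its first configuration is labelled
by an initial state. -/
def Execution.Initial (ρ : Execution V P r) : Prop :=
  ∀ v, (ρ.cfg 0).label v ∈ P.init

/-- An execution synchronizes in `F` if every node of its last configuration is
labelled by a state in `F`. -/
def Execution.Synchronizes (ρ : Execution V P r) (F : Set Q) : Prop :=
  ∀ v, (ρ.cfg r).label v ∈ F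

/-- An execution is `k`-constrained if every reconfiguration step changes at most
`k` edges. -/
def Execution.KConstrained (k : ℕ) (ρ : Execution V P r) : Prop :=
  ∀ i < r, ρ.ty i = .reconf → dist (ρ.cfg i) (ρ.cfg (i + 1)) ≤ k

/-- An execution is strongly `k`-constrained if every reconfiguration step changes
exactly `k` edges. -/
def Execution.StronglyKConstrained (k : ℕ) (ρ : Execution V P r) : Prop :=
  ∀ i < r, ρ.ty i = .reconf → dist (ρ.cfg i) (ρ.cfg (i + 1)) = k

/-- An execution is `k`-locally-constrained if, at every step and for every node `v`,
at most `k` edges incident to `v` belong to the symmetric difference of the edge sets. -/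
def Execution.LocallyConstrained (k : ℕ) (ρ : Execution V P r) : Prop :=
  ∀ (v : V), ∀ i < r, localDist v (ρ.cfg i) (ρ.cfg (i + 1)) ≤ k

/-- An execution is `f`-constrained if every reconfiguration step changes at most
`f n` edges, where `n` is the number of nodes. -/
def Execution.FConstrained [Fintype V] (f : ℕ → ℕ) (ρ : Execution V P r) : Prop :=
  ∀ i < r, ρ.ty i = .reconf → dist (ρ.cfg i) (ρ.cfg (i + 1)) ≤ f (Fintype.card V)

/-- The number of communication steps of an execution. -/
def Execution.nbcomm (ρ : Execution V P r) : ℕ :=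
  ((Finset.range r).filter (fun i => ρ.ty i = StepType.comm)).card

/-- The total number of edge reconfigurations along an execution. -/
noncomputable def Execution.nbreconfig (ρ : Execution V P r) : ℕ :=
  ∑ i ∈ (Finset.range r).filter (fun i => ρ.ty i = StepType.reconf),
    dist (ρ.cfg i) (ρ.cfg (i + 1))

/-- An execution is `k`-balanced if it starts and ends with a communication step
and `nbreconfig ρ ≤ k * (nbcomm ρ - 1)`. -/
def Execution.Balanced (k : ℕ) (ρ : Execution V P r) : Prop :=
  1 ≤ r ∧ ρ.ty 0 = StepType.comm ∧ ρ.ty (r - 1) = StepType.comm ∧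
    ρ.nbreconfig ≤ k * (ρ.nbcomm - 1)

/-- Juxtaposition `G ⊕ H` of two configurations: disjoint union. -/
def Config.juxt {V W Q : Type} (G : Config V Q) (H : Config W Q) : Config (V ⊕ W) Q where
  graph := SimpleGraph.fromEdgeSet
    (Sym2.map Sum.inl '' G.graph.edgeSet ∪ Sym2.map Sum.inr '' H.graph.edgeSet)
  label := Sum.elim G.label H.label

/-- `G ^ N`: juxtaposition of `N` disjoint copies of `G`. -/
def Config.pow {V Q : Type} (G : Config V Q) (N : ℕ) : Config (V × Fin N) Q where
  graph := SimpleGraph.fromEdgeSet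
    (⋃ i : Fin N, Sym2.map (fun v => (v, i)) '' G.graph.edgeSet)
  label := fun p => G.label p.1

/-- Renaming the nodes of a configuration along a bijection. -/
def Config.rename {V W Q : Type} (e : V ≃ W) (G : Config V Q) : Config W Q where
  graph := SimpleGraph.comap e.symm G.graph
  label := G.label ∘ e.symm


variable {Q M V : Type} {P : BroadcastProtocol Q M} {r : ℕ}

/-- `κ(ρ)`: the total number of repeated atomic reconfigurations of `ρ`, i.e. the sum,
over the reconfiguration steps of `ρ`, of `max(d(G_i, G_{i+1}) - 1, 0)`. -/
noncomputable def Execution.kappa (ρ : Execution V P r) : ℕ :=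
  ∑ i ∈ (Finset.range r).filter (fun i => ρ.ty i = StepType.reconf),
    (dist (ρ.cfg i) (ρ.cfg (i + 1)) - 1)


/-! ### Auxiliary development for the end-phase lemma -/

section Aux

variable {Q M : Type}

/-- Flip a step type. -/
def sflip : StepType → StepType
  | .comm => .reconf
  | .reconf => .comm

@[simp] lemma sflip_sflip (t : StepType) : sflip (sflip t) = t := by cases t <;> rfl

lemma sflip_ne (t : StepType) : sflip t ≠ t := by cases t <;> simp [sflip]

lemma eq_sflip_of_ne {s t : StepType} (h : s ≠ t) : s = sflip t := by
  cases s <;> cases t <;> simp_all [sflip]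

/-- Iterated flip. -/
def flipIter (t : StepType) (i : ℕ) : StepType := if Even i then t else sflip t

@[simp] lemma flipIter_zero (t : StepType) : flipIter t 0 = t := rfl

lemma flipIter_succ (t : StepType) (i : ℕ) : flipIter t (i + 1) = flipIter (sflip t) i := by
  rcases Nat.even_or_odd i with h | h
  · simp [flipIter, h, Nat.even_add_one, Nat.not_even_iff_odd.2 h.add_one]
  · simp [flipIter, Nat.not_even_iff_odd.2 h, Nat.even_add_one, Nat.odd_iff.1 h]

lemma flipIter_succ_ne (t : StepType) (i : ℕ) : flipIter t (i + 1) ≠ flipIter t i := by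
  rw [flipIter_succ]
  unfold flipIter
  split
  · exact sflip_ne t
  · rw [sflip_sflip]; exact fun hh => sflip_ne t hh.symm

/-- A valid step of declared type `t`, with reconfigurations changing at most one edge. -/
def Ok {W : Type} (P : BroadcastProtocol Q M) (t : StepType) (G G' : Config W Q) : Prop :=
  (t = .comm → CommStep P G G') ∧ (t = .reconf → ReconfStep G G' ∧ dist G G' ≤ 1)

lemma okComm {W : Type} {P : BroadcastProtocol Q M} {G G' : Config W Q}
    (h : CommStep P G G') : Ok P .comm G G' :=
  And.intro (fun _ => h) (fun h' => nomatch h')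

lemma okReconf {W : Type} {P : BroadcastProtocol Q M} {G G' : Config W Q}
    (h : ReconfStep G G') (hd : dist G G' ≤ 1) : Ok P .reconf G G' :=
  And.intro (fun h' => nomatch h') (fun _ => ⟨h, hd⟩)

/-- A nonempty alternating sequence of valid steps, from `G` to `H`, whose first step has
type `t` and last step has type `b`; `l` is the list of visited configurations. -/
inductive Steps {W : Type} (P : BroadcastProtocol Q M) :
    StepType → StepType → Config W Q → Config W Q → List (Config W Q) → Prop where
  | single {t : StepType} {G G' : Config W Q} (h : Ok P t G G') : Steps P t t G G' [G, G']
  | cons {t b : StepType} {G G' G'' : Config W Q} {l : List (Config W Q)}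
      (h : Ok P t G G') (h' : Steps P (sflip t) b G' G'' l) : Steps P t b G G'' (G :: l)

namespace Steps

variable {W : Type} {P : BroadcastProtocol Q M}

lemma two_le_length {t b : StepType} {G H : Config W Q} {l : List (Config W Q)}
    (h : Steps P t b G H l) : 2 ≤ l.length := by
  induction h with
  | single _ => simp
  | cons _ _ ih => simp; omega

lemma getD_zero {t b : StepType} {G H D : Config W Q} {l : List (Config W Q)}
    (h : Steps P t b G H l) : l.getD 0 D = G := by
  cases h <;> rfl

lemma getD_last {t b : StepType} {G H D : Config W Q} {l : List (Config W Q)}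
    (h : Steps P t b G H l) : l.getD (l.length - 1) D = H := by
  induction h with
  | single _ => rfl
  | @cons t b G G' G'' l _ h' ih =>
      have h2 := h'.two_le_length
      have : (G :: l).length - 1 = (l.length - 1) + 1 := by simp; omega
      rw [this, List.getD_cons_succ, ih]

lemma ok_getD {t b : StepType} {G H : Config W Q} {l : List (Config W Q)}
    (h : Steps P t b G H l) (D : Config W Q) :
    ∀ i, i + 1 < l.length → Ok P (flipIter t i) (l.getD i D) (l.getD (i + 1) D) := by
  induction h with
  | single hok =>
      intro i hi
      simp at hi
      obtain rfl : i = 0 := by omega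
      simpa [flipIter] using hok
  | @cons t b G G' G'' l hok h' ih =>
      intro i hi
      cases i with
      | zero =>
          simp only [List.getD_cons_zero, List.getD_cons_succ, flipIter_zero]
          rw [h'.getD_zero]
          exact hok
      | succ i =>
          simp only [List.getD_cons_succ]
          rw [flipIter_succ]
          exact ih i (by simpa using Nat.lt_of_succ_lt_succ hi)

lemma append {t a b : StepType} {G H K : Config W Q} {l₁ l₂ : List (Config W Q)}
    (h₁ : Steps P t a G H l₁) (h₂ : Steps P (sflip a) b H K l₂) :
    ∃ l, Steps P t b G K l := by
  induction h₁ with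
  | single hok => exact ⟨_, .cons hok h₂⟩
  | cons hok _ ih =>
      obtain ⟨l, hl⟩ := ih h₂
      exact ⟨_, .cons hok hl⟩

/-- Convert an abstract run into an `Execution` that is 1-constrained. -/
lemma toExecution {t b : StepType} {G H : Config W Q} {l : List (Config W Q)}
    (h : Steps P t b G H l) :
    ∃ (r' : ℕ) (ρ' : Execution W P r'), ρ'.KConstrained 1 ∧ ρ'.cfg 0 = G ∧ ρ'.cfg r' = H := by
  have h2 := h.two_le_length
  refine ⟨l.length - 1,
    { cfg := fun i => l.getD i G
      ty := fun i => flipIter t i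
      step_comm := fun i hi hty => (h.ok_getD G i (by omega)).1 hty
      step_reconf := fun i hi hty => ((h.ok_getD G i (by omega)).2 hty).1
      alternate := fun i _ => flipIter_succ_ne t i }, ?_, ?_, ?_⟩
  · intro i hi hty
    exact ((h.ok_getD G i (by omega)).2 hty).2
  · exact h.getD_zero
  · exact h.getD_last

end Steps

end Aux

section Big

variable {Q M V : Type}

lemma sym2_map_image_mem {α β : Type} {f : α → β} {s : Set (Sym2 α)} {x y : β} :
    s(x, y) ∈ Sym2.map f '' s ↔
      ∃ u v, s(u, v) ∈ s ∧ ((f u = x ∧ f v = y) ∨ (f u = y ∧ f v = x)) := by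
  constructor
  · rintro ⟨e, he, hm⟩
    induction e using Sym2.ind with
    | _ u v =>
        rw [Sym2.map_pair_eq, Sym2.eq_iff] at hm
        rcases hm with ⟨h1, h2⟩ | ⟨h1, h2⟩
        · exact ⟨u, v, he, Or.inl ⟨h1, h2⟩⟩
        · exact ⟨u, v, he, Or.inr ⟨h1, h2⟩⟩
  · rintro ⟨u, v, hs, h⟩
    refine ⟨s(u, v), hs, ?_⟩
    rw [Sym2.map_pair_eq, Sym2.eq_iff]
    tauto

variable (V) in
/-- The index of the copy a node belongs to. -/
def idx {N K : ℕ} : (V × Fin N) ⊕ (V × Fin K) → Fin N ⊕ Fin K :=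
  Sum.elim (fun p => .inl p.2) (fun p => .inr p.2)

variable (V) in
/-- The `V`-coordinate of a node. -/
def vrt {N K : ℕ} : (V × Fin N) ⊕ (V × Fin K) → V :=
  Sum.elim Prod.fst Prod.fst

/-- The node of copy `c` with `V`-coordinate `v`. -/
def emb {N K : ℕ} (v : V) : Fin N ⊕ Fin K → (V × Fin N) ⊕ (V × Fin K) :=
  fun c => match c with
  | .inl i => .inl (v, i)
  | .inr t => .inr (v, t)

@[simp] lemma idx_emb {N K : ℕ} (v : V) (c : Fin N ⊕ Fin K) : idx V (emb v c) = c := by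
  cases c <;> rfl

@[simp] lemma vrt_emb {N K : ℕ} (v : V) (c : Fin N ⊕ Fin K) : vrt V (emb v c) = v := by
  cases c <;> rfl

lemma emb_vrt_idx {N K : ℕ} (w : (V × Fin N) ⊕ (V × Fin K)) : emb (vrt V w) (idx V w) = w := by
  rcases w with ⟨v, i⟩ | ⟨v, t⟩ <;> rfl

lemma emb_injective {N K : ℕ} (c : Fin N ⊕ Fin K) :
    Function.Injective (fun v : V => emb v c) := by
  intro a b h
  have := congrArg (vrt V) h
  simpa using this

/-- The configuration on a disjoint union of copies of `V` determined by a family of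
configurations on `V`, one for each copy. -/
def bigCfg {N K : ℕ} (F : Fin N ⊕ Fin K → Config V Q) : Config ((V × Fin N) ⊕ (V × Fin K)) Q where
  graph :=
    { Adj := fun w w' => idx V w = idx V w' ∧ (F (idx V w)).graph.Adj (vrt V w) (vrt V w')
      symm := by
        refine ⟨?_⟩
        rintro a b ⟨h1, h2⟩
        exact ⟨h1.symm, h1 ▸ h2.symm⟩
      loopless := by
        refine ⟨?_⟩
        rintro a ⟨-, h⟩
        exact (F (idx V a)).graph.loopless.irrefl _ h }
  label := fun w => (F (idx V w)).label (vrt V w)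

lemma bigCfg_adj {N K : ℕ} (F : Fin N ⊕ Fin K → Config V Q)
    (w w' : (V × Fin N) ⊕ (V × Fin K)) :
    (bigCfg F).graph.Adj w w' ↔
      idx V w = idx V w' ∧ (F (idx V w)).graph.Adj (vrt V w) (vrt V w') := Iff.rfl

@[simp] lemma bigCfg_label {N K : ℕ} (F : Fin N ⊕ Fin K → Config V Q)
    (w : (V × Fin N) ⊕ (V × Fin K)) :
    (bigCfg F).label w = (F (idx V w)).label (vrt V w) := rfl

lemma Config.ext' {W : Type} {G H : Config W Q} (hg : G.graph = H.graph)
    (hl : G.label = H.label) : G = H := by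
  cases G; cases H; cases hg; cases hl; rfl

lemma bigCfg_congr {N K : ℕ} {F F' : Fin N ⊕ Fin K → Config V Q}
    (h : ∀ w : (V × Fin N) ⊕ (V × Fin K), F (idx V w) = F' (idx V w)) :
    bigCfg (Q := Q) F = bigCfg F' := by
  refine Config.ext' ?_ ?_
  · ext w w'
    rw [bigCfg_adj, bigCfg_adj, h w]
  · funext w
    rw [bigCfg_label, bigCfg_label, h w]

/-- Lifting a communication step to a single copy of a big configuration. -/
lemma commStep_bigCfg {N K : ℕ} {P : BroadcastProtocol Q M}
    {F : Fin N ⊕ Fin K → Config V Q} {c : Fin N ⊕ Fin K} {G G' : Config V Q}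
    (hFc : F c = G) (h : CommStep P G G') :
    CommStep P (bigCfg F) (bigCfg (Function.update F c G')) := by
  obtain ⟨hgraph, v, m, hbrd, hrcv, hoth⟩ := h
  constructor
  · ext w w'
    rw [bigCfg_adj, bigCfg_adj]
    by_cases hc : idx V w = c
    · rw [hc, Function.update_self, hFc, hgraph]
    · rw [Function.update_of_ne hc]
  · refine ⟨emb v c, m, ?_, ?_, ?_⟩
    · simp only [bigCfg_label]
      rw [idx_emb, Function.update_self, vrt_emb, hFc]
      exact hbrd
    · intro u hu
      rw [bigCfg_adj] at hu
      simp only [idx_emb, vrt_emb] at hu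
      obtain ⟨h1, h2⟩ := hu
      rw [hFc] at h2
      simp only [bigCfg_label]
      rw [← h1, Function.update_self, hFc]
      exact hrcv _ h2
    · intro u hne hnadj
      rw [bigCfg_label, bigCfg_label]
      by_cases hc : idx V u = c
      · have hvne : vrt V u ≠ v := by
          intro hv
          exact hne (by rw [← emb_vrt_idx u, hv, hc])
        have hna : ¬ G.graph.Adj v (vrt V u) := by
          intro hadj
          refine hnadj ?_
          rw [bigCfg_adj]
          refine ⟨by simp [hc], ?_⟩
          simp only [idx_emb, vrt_emb, hFc]
          exact hadj
        rw [hc, Function.update_self, hFc]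
        exact hoth _ hvne hna
      · rw [Function.update_of_ne hc]

/-- Lifting a relabelling-free reconfiguration to a single copy. -/
lemma reconfStep_bigCfg {N K : ℕ} {F : Fin N ⊕ Fin K → Config V Q} {c : Fin N ⊕ Fin K}
    {H : Config V Q} (hl : H.label = (F c).label) :
    ReconfStep (Q := Q) (bigCfg F) (bigCfg (Function.update F c H)) := by
  funext w
  rw [bigCfg_label, bigCfg_label]
  by_cases hc : idx V w = c
  · rw [hc, Function.update_self, hl]
  · rw [Function.update_of_ne hc]

lemma emb_eq_iff {N K : ℕ} {u : V} {c : Fin N ⊕ Fin K} {w : (V × Fin N) ⊕ (V × Fin K)} :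
    emb u c = w ↔ u = vrt V w ∧ idx V w = c := by
  constructor
  · rintro rfl; simp
  · rintro ⟨rfl, rfl⟩; exact emb_vrt_idx w

lemma symmDiff_bigCfg {N K : ℕ} (F : Fin N ⊕ Fin K → Config V Q) (c : Fin N ⊕ Fin K)
    (H : Config V Q) :
    symmDiff (bigCfg F).graph.edgeSet (bigCfg (Function.update F c H)).graph.edgeSet =
      Sym2.map (fun v : V => emb v c) '' symmDiff (F c).graph.edgeSet H.graph.edgeSet := by
  ext e
  induction e using Sym2.ind with
  | _ w w' =>
    rw [Set.mem_symmDiff]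
    simp only [SimpleGraph.mem_edgeSet, bigCfg_adj, Function.update_apply]
    rw [sym2_map_image_mem]
    constructor
    · intro hmem
      have hii : idx V w = idx V w' := by
        rcases hmem with ⟨⟨h1, _⟩, _⟩ | ⟨⟨h1, _⟩, _⟩ <;> exact h1
      by_cases h1 : idx V w = c
      · have h2 : idx V w' = c := hii.symm.trans h1
        refine ⟨vrt V w, vrt V w', ?_, Or.inl ⟨?_, ?_⟩⟩
        · rw [Set.mem_symmDiff]
          simp only [SimpleGraph.mem_edgeSet]
          rcases hmem with ⟨⟨_, ha⟩, hb⟩ | ⟨⟨_, ha⟩, hb⟩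
          · rw [h1] at ha
            exact Or.inl ⟨ha, fun hH => hb ⟨hii, by rw [if_pos h1]; exact hH⟩⟩
          · rw [if_pos h1] at ha
            exact Or.inr ⟨ha, fun hF => hb ⟨hii, by rw [h1]; exact hF⟩⟩
        · rw [emb_eq_iff]; exact ⟨rfl, h1⟩
        · rw [emb_eq_iff]; exact ⟨rfl, h2⟩
      · exfalso
        rcases hmem with ⟨⟨_, ha⟩, hb⟩ | ⟨⟨_, ha⟩, hb⟩
        · exact hb ⟨hii, by rw [if_neg h1]; exact ha⟩
        · rw [if_neg h1] at ha
          exact hb ⟨hii, ha⟩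
    · rintro ⟨u, v, hm, ⟨hu, hv⟩ | ⟨hu, hv⟩⟩
      · subst hu; subst hv
        rw [Set.mem_symmDiff] at hm
        simp only [SimpleGraph.mem_edgeSet] at hm
        simpa using hm
      · subst hu; subst hv
        rw [Sym2.eq_swap, Set.mem_symmDiff] at hm
        simp only [SimpleGraph.mem_edgeSet] at hm
        simpa using hm

lemma dist_bigCfg {N K : ℕ} (F : Fin N ⊕ Fin K → Config V Q) (c : Fin N ⊕ Fin K)
    (H : Config V Q) :
    dist (Q := Q) (bigCfg F) (bigCfg (Function.update F c H)) = dist (F c) H := by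
  rw [dist, dist, symmDiff_bigCfg]
  exact Set.ncard_image_of_injective _ (Sym2.map.injective (emb_injective c))

end Big

section Toggle

variable {Q V : Type}

/-- Toggle a single edge of a configuration. -/
noncomputable def toggle (X : Config V Q) (e : Sym2 V) : Config V Q where
  graph := SimpleGraph.fromEdgeSet (symmDiff X.graph.edgeSet {e})
  label := X.label

@[simp] lemma toggle_label (X : Config V Q) (e : Sym2 V) : (toggle X e).label = X.label := rfl

lemma toggle_edgeSet (X : Config V Q) {e : Sym2 V} (he : ¬ e.IsDiag) :
    (toggle X e).graph.edgeSet = symmDiff X.graph.edgeSet {e} := by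
  rw [toggle, SimpleGraph.edgeSet_fromEdgeSet, sdiff_eq_left]
  rw [Set.disjoint_right]
  intro a ha hs
  rw [Set.mem_symmDiff] at hs
  rcases hs with ⟨hs, -⟩ | ⟨hs, -⟩
  · exact X.graph.not_isDiag_of_mem_edgeSet hs ha
  · rw [Set.mem_singleton_iff] at hs
    subst hs
    exact he ha

lemma dist_toggle (X : Config V Q) {e : Sym2 V} (he : ¬ e.IsDiag) :
    dist X (toggle X e) = 1 := by
  rw [dist, toggle_edgeSet X he, symmDiff_symmDiff_cancel_left, Set.ncard_singleton]

lemma foldl_toggle_label (es : List (Sym2 V)) (X : Config V Q) :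
    (es.foldl toggle X).label = X.label := by
  induction es generalizing X with
  | nil => rfl
  | cons e es ih => rw [List.foldl_cons, ih, toggle_label]

lemma foldl_toggle_edgeSet (es : List (Sym2 V)) (X : Config V Q)
    (hd : ∀ e ∈ es, ¬ e.IsDiag) (hnd : es.Nodup) :
    (es.foldl toggle X).graph.edgeSet = symmDiff X.graph.edgeSet {e | e ∈ es} := by
  induction es generalizing X with
  | nil =>
      have : {e : Sym2 V | e ∈ ([] : List (Sym2 V))} = (⊥ : Set (Sym2 V)) := by
        ext e; simp
      rw [List.foldl_nil, this, symmDiff_bot]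
  | cons e es ih =>
      rw [List.foldl_cons, ih _ (fun x hx => hd x (List.mem_cons_of_mem e hx)) hnd.of_cons,
        toggle_edgeSet X (hd e List.mem_cons_self), symmDiff_assoc]
      congr 1
      have hdisj : Disjoint ({e} : Set (Sym2 V)) {x | x ∈ es} := by
        rw [Set.disjoint_left]
        intro a ha hb
        rw [Set.mem_singleton_iff] at ha
        subst ha
        exact (List.nodup_cons.1 hnd).1 hb
      rw [hdisj.symmDiff_eq_sup]
      ext x
      simp

lemma foldl_toggle_eq (es : List (Sym2 V)) (X G' : Config V Q)
    (hd : ∀ e ∈ es, ¬ e.IsDiag) (hnd : es.Nodup)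
    (hset : {e : Sym2 V | e ∈ es} = symmDiff X.graph.edgeSet G'.graph.edgeSet)
    (hl : G'.label = X.label) :
    es.foldl toggle X = G' := by
  refine Config.ext' ?_ ?_
  · rw [← SimpleGraph.edgeSet_inj, foldl_toggle_edgeSet es X hd hnd, hset,
      symmDiff_symmDiff_cancel_left]
  · rw [foldl_toggle_label, hl]

end Toggle

section Shapes

variable {Q V : Type}

lemma pow_adj (G : Config V Q) (N : ℕ) (p p' : V × Fin N) :
    (G.pow N).graph.Adj p p' ↔ p.2 = p'.2 ∧ G.graph.Adj p.1 p'.1 := by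
  rw [Config.pow, SimpleGraph.fromEdgeSet_adj]
  constructor
  · rintro ⟨hm, hne⟩
    rw [Set.mem_iUnion] at hm
    obtain ⟨i, hm⟩ := hm
    rw [sym2_map_image_mem] at hm
    obtain ⟨u, v, huv, h⟩ := hm
    rw [SimpleGraph.mem_edgeSet] at huv
    rcases h with ⟨h1, h2⟩ | ⟨h1, h2⟩
    · subst h1; subst h2; exact ⟨rfl, huv⟩
    · subst h1; subst h2; exact ⟨rfl, huv.symm⟩
  · rintro ⟨h2, hadj⟩
    refine ⟨?_, fun hpe => hadj.ne (congrArg Prod.fst hpe)⟩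
    rw [Set.mem_iUnion]
    refine ⟨p.2, ?_⟩
    rw [sym2_map_image_mem]
    refine ⟨p.1, p'.1, hadj, Or.inl ⟨?_, ?_⟩⟩
    · simp
    · rw [h2]

lemma juxt_adj {α β : Type} (A : Config α Q) (B : Config β Q) (w w' : α ⊕ β) :
    (Config.juxt A B).graph.Adj w w' ↔
      (∃ a a', w = .inl a ∧ w' = .inl a' ∧ A.graph.Adj a a') ∨
      (∃ b b', w = .inr b ∧ w' = .inr b' ∧ B.graph.Adj b b') := by
  rw [Config.juxt, SimpleGraph.fromEdgeSet_adj]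
  constructor
  · rintro ⟨hm, hne⟩
    rcases hm with hm | hm <;> rw [sym2_map_image_mem] at hm <;>
      obtain ⟨u, v, huv, h⟩ := hm <;> rw [SimpleGraph.mem_edgeSet] at huv
    · rcases h with ⟨h1, h2⟩ | ⟨h1, h2⟩
      · exact Or.inl ⟨u, v, h1.symm, h2.symm, huv⟩
      · exact Or.inl ⟨v, u, h2.symm, h1.symm, huv.symm⟩
    · rcases h with ⟨h1, h2⟩ | ⟨h1, h2⟩
      · exact Or.inr ⟨u, v, h1.symm, h2.symm, huv⟩
      · exact Or.inr ⟨v, u, h2.symm, h1.symm, huv.symm⟩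
  · rintro (⟨a, a', rfl, rfl, h⟩ | ⟨b, b', rfl, rfl, h⟩)
    · refine ⟨Or.inl ?_, fun he => h.ne (Sum.inl.injEq .. ▸ he)⟩
      rw [sym2_map_image_mem]
      exact ⟨a, a', h, Or.inl ⟨rfl, rfl⟩⟩
    · refine ⟨Or.inr ?_, fun he => h.ne (Sum.inr.injEq .. ▸ he)⟩
      rw [sym2_map_image_mem]
      exact ⟨b, b', h, Or.inl ⟨rfl, rfl⟩⟩

lemma bigCfg_elim_eq_juxt {N K : ℕ} (A B : Config V Q) :
    bigCfg (fun c : Fin N ⊕ Fin K => Sum.elim (fun _ : Fin N => A) (fun _ : Fin K => B) c) =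
      Config.juxt (A.pow N) (B.pow K) := by
  refine Config.ext' ?_ ?_
  · ext w w'
    rw [bigCfg_adj, juxt_adj]
    rcases w with ⟨v, i⟩ | ⟨v, t⟩ <;> rcases w' with ⟨v', i'⟩ | ⟨v', t'⟩
    · simp only [idx, vrt, Sum.elim_inl, Sum.inl.injEq]
      constructor
      · rintro ⟨h1, h2⟩
        exact Or.inl ⟨(v, i), (v', i'), rfl, rfl, (pow_adj A N _ _).2 ⟨h1, h2⟩⟩
      · rintro (⟨a, a', ha, ha', h⟩ | ⟨b, b', hb, -, -⟩)
        · cases ha; cases ha'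
          exact (pow_adj A N _ _).1 h
        · cases hb
    · simp only [idx, vrt, Sum.elim_inl, Sum.elim_inr]
      constructor
      · rintro ⟨h1, -⟩
        cases h1
      · rintro (⟨a, a', -, ha', -⟩ | ⟨b, b', hb, -, -⟩)
        · cases ha'
        · cases hb
    · simp only [idx, vrt, Sum.elim_inl, Sum.elim_inr]
      constructor
      · rintro ⟨h1, -⟩
        cases h1
      · rintro (⟨a, a', ha, -, -⟩ | ⟨b, b', -, hb', -⟩)
        · cases ha
        · cases hb'
    · simp only [idx, vrt, Sum.elim_inr, Sum.inr.injEq]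
      constructor
      · rintro ⟨h1, h2⟩
        exact Or.inr ⟨(v, t), (v', t'), rfl, rfl, (pow_adj B K _ _).2 ⟨h1, h2⟩⟩
      · rintro (⟨a, a', ha, -, -⟩ | ⟨b, b', hb, hb', h⟩)
        · cases ha
        · cases hb; cases hb'
          exact (pow_adj B K _ _).1 h
  · funext w
    rcases w with ⟨v, i⟩ | ⟨v, t⟩ <;> rfl

lemma equiv_symm_eval {N K : ℕ} (w : (V × Fin N) ⊕ (V × Fin K)) :
    (((Equiv.refl V).prodCongr finSumFinEquiv.symm).trans
        (Equiv.prodSumDistrib V (Fin N) (Fin K))).symm w =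
      (vrt V w, finSumFinEquiv (idx V w)) := by
  rw [Equiv.symm_apply_eq]
  rcases w with ⟨v, i⟩ | ⟨v, t⟩ <;> simp [idx, vrt]

lemma bigCfg_const_eq_rename {N K : ℕ} (C : Config V Q) :
    bigCfg (fun _ : Fin N ⊕ Fin K => C) =
      Config.rename
        (((Equiv.refl V).prodCongr finSumFinEquiv.symm).trans
          (Equiv.prodSumDistrib V (Fin N) (Fin K)))
        (C.pow (N + K)) := by
  refine Config.ext' ?_ ?_
  · ext w w'
    rw [bigCfg_adj]
    show _ ↔ (C.pow (N + K)).graph.Adj _ _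
    rw [pow_adj, equiv_symm_eval, equiv_symm_eval]
    constructor
    · rintro ⟨h1, h2⟩
      exact ⟨congrArg finSumFinEquiv h1, h2⟩
    · rintro ⟨h1, h2⟩
      exact ⟨finSumFinEquiv.injective h1, h2⟩
  · funext w
    show _ = (C.pow (N + K)).label _
    rw [Config.pow, equiv_symm_eval]
    rfl

end Shapes

section Main

variable {Q M V : Type} {P : BroadcastProtocol Q M} {n : ℕ}

/-- The bookkeeping family of configurations: main copies `< k` are done (at `G_n`),
main copy `k` is at `X`, main copies `> k` are waiting (at `G_1`); the first `u` extra
copies are used up (at `G_n`), the remaining ones are fresh (at `G_{n-1}`). -/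
def st (ρ : Execution V P n) (N K k u : ℕ) (X : Config V Q) : Fin N ⊕ Fin K → Config V Q :=
  fun c => match c with
  | .inl i => if i.1 < k then ρ.cfg n else if i.1 = k then X else ρ.cfg 1
  | .inr t => if t.1 < u then ρ.cfg n else ρ.cfg (n - 1)

lemma st_main (ρ : Execution V P n) {N : ℕ} (K k u : ℕ) (X : Config V Q) (hk : k < N) :
    st ρ N K k u X (Sum.inl ⟨k, hk⟩) = X := by
  simp [st]

lemma st_extra (ρ : Execution V P n) {K : ℕ} (N k u : ℕ) (X : Config V Q) (hu : u < K) :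
    st ρ N K k u X (Sum.inr ⟨u, hu⟩) = ρ.cfg (n - 1) := by
  simp [st]

lemma st_update_main (ρ : Execution V P n) {N : ℕ} (K k u : ℕ) (X Y : Config V Q)
    (hk : k < N) :
    Function.update (st ρ N K k u X) (Sum.inl ⟨k, hk⟩) Y = st ρ N K k u Y := by
  funext c
  rw [Function.update_apply]
  rcases c with i | t
  · by_cases hik : i = (⟨k, hk⟩ : Fin N)
    · subst hik
      simp [st]
    · have h1 : i.1 ≠ k := fun h => hik (Fin.ext h)
      have h2 : ¬ (Sum.inl i = (Sum.inl ⟨k, hk⟩ : Fin N ⊕ Fin K)) := by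
        simp only [Sum.inl.injEq]
        exact hik
      rw [if_neg h2]
      show st ρ N K k u X (Sum.inl i) = st ρ N K k u Y (Sum.inl i)
      simp only [st]
      split_ifs <;> first | rfl | omega
  · rw [if_neg (by simp)]
    rfl

lemma st_update_extra (ρ : Execution V P n) {K : ℕ} (N k u : ℕ) (X : Config V Q)
    (hu : u < K) :
    Function.update (st ρ N K k u X) (Sum.inr ⟨u, hu⟩) (ρ.cfg n) = st ρ N K k (u + 1) X := by
  funext c
  rw [Function.update_apply]
  rcases c with i | t
  · rw [if_neg (by simp)]
    rfl
  · by_cases htu : t = (⟨u, hu⟩ : Fin K)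
    · subst htu
      simp [st]
    · have h1 : t.1 ≠ u := fun h => htu (Fin.ext h)
      have h2 : ¬ (Sum.inr t = (Sum.inr ⟨u, hu⟩ : Fin N ⊕ Fin K)) := by
        simp only [Sum.inr.injEq]
        exact htu
      rw [if_neg h2]
      show st ρ N K k u X (Sum.inr t) = st ρ N K k (u + 1) X (Sum.inr t)
      simp only [st]
      split_ifs <;> first | rfl | omega

lemma st_succ_main (ρ : Execution V P n) (N K k u : ℕ) :
    st ρ N K k u (ρ.cfg n) = st ρ N K (k + 1) u (ρ.cfg 1) := by
  funext c
  rcases c with i | t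
  · show (if i.1 < k then ρ.cfg n else if i.1 = k then ρ.cfg n else ρ.cfg 1) = _
    show _ = (if i.1 < k + 1 then ρ.cfg n else if i.1 = k + 1 then ρ.cfg 1 else ρ.cfg 1)
    split_ifs <;> first | rfl | omega
  · rfl

/-- The chain of unit reconfigurations toggling the edges in `es` on main copy `k`,
interleaved with borrowed communication steps on fresh extra copies. -/
lemma chain_run {N K : ℕ} (ρ : Execution V P n)
    (hcomm : CommStep P (ρ.cfg (n - 1)) (ρ.cfg n)) {k : ℕ} (hk : k < N) :
    ∀ es : List (Sym2 V), es ≠ [] → (∀ e ∈ es, ¬ e.IsDiag) →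
      ∀ (X : Config V Q) (u : ℕ), u + (es.length - 1) ≤ K →
        ∃ l, Steps P .reconf .reconf (bigCfg (st ρ N K k u X))
          (bigCfg (st ρ N K k (u + (es.length - 1)) (es.foldl toggle X))) l := by
  intro es
  induction es with
  | nil => exact fun h => absurd rfl h
  | cons e es ih =>
    intro _ hdiag X u hu
    have hok1 : Ok P .reconf (bigCfg (st ρ N K k u X)) (bigCfg (st ρ N K k u (toggle X e))) := by
      rw [← st_update_main ρ K k u X (toggle X e) hk]
      refine okReconf (reconfStep_bigCfg ?_) ?_
      · rw [st_main ρ K k u X hk]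
        exact toggle_label X e
      · rw [dist_bigCfg, st_main ρ K k u X hk, dist_toggle X (hdiag e List.mem_cons_self)]
    rcases es with _ | ⟨e', es'⟩
    · exact ⟨_, Steps.single hok1⟩
    · have hu' : u < K := by
        simp only [List.length_cons] at hu
        omega
      have hok2 : Ok P .comm (bigCfg (st ρ N K k u (toggle X e)))
          (bigCfg (st ρ N K k (u + 1) (toggle X e))) := by
        rw [← st_update_extra ρ N k u (toggle X e) hu']
        exact okComm (commStep_bigCfg (st_extra ρ N k u (toggle X e) hu') hcomm)
      obtain ⟨l, hl⟩ := ih (by simp) (fun x hx => hdiag x (List.mem_cons_of_mem e hx))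
        (toggle X e) (u + 1) (by simp only [List.length_cons] at hu ⊢; omega)
      have harith : u + 1 + ((e' :: es').length - 1) = u + ((e :: e' :: es').length - 1) := by
        simp only [List.length_cons]
        omega
      rw [harith] at hl
      exact ⟨_, Steps.cons hok1 (Steps.cons hok2 hl)⟩

/-- Simulation of one (possibly repeated) reconfiguration step on main copy `k`,
using `d - 1` borrowed communication steps. -/
lemma reconf_block {N K : ℕ} (ρ : Execution V P n)
    (hcomm : CommStep P (ρ.cfg (n - 1)) (ρ.cfg n)) {k : ℕ} (hk : k < N)
    (G G' : Config V Q) (hlab : G'.label = G.label) (u : ℕ)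
    (hu : u + (dist G G' - 1) ≤ K) :
    ∃ l, Steps P .reconf .reconf (bigCfg (st ρ N K k u G))
      (bigCfg (st ρ N K k (u + (dist G G' - 1)) G')) l := by
  by_cases hle : dist G G' ≤ 1
  · have h0 : dist G G' - 1 = 0 := by omega
    rw [h0, Nat.add_zero, ← st_update_main ρ K k u G G' hk]
    refine ⟨_, Steps.single (okReconf (reconfStep_bigCfg ?_) ?_)⟩
    · rw [st_main ρ K k u G hk]
      exact hlab
    · rw [dist_bigCfg, st_main ρ K k u G hk]
      exact hle
  · have hfin : (symmDiff G.graph.edgeSet G'.graph.edgeSet).Finite := by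
      by_contra hinf
      have h0 := Set.Infinite.ncard hinf
      rw [dist] at hle
      omega
    set es : List (Sym2 V) := hfin.toFinset.toList with hes
    have hlen : es.length = dist G G' := by
      rw [hes, Finset.length_toList, dist, Set.ncard_eq_toFinset_card _ hfin]
    have hnd : es.Nodup := Finset.nodup_toList _
    have hmem : ∀ x, x ∈ es ↔ x ∈ symmDiff G.graph.edgeSet G'.graph.edgeSet := fun x => by
      rw [hes, Finset.mem_toList, Set.Finite.mem_toFinset]
    have hdiag : ∀ e ∈ es, ¬ e.IsDiag := by
      intro e he
      have hmem' := (hmem e).1 he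
      rw [Set.mem_symmDiff] at hmem'
      rcases hmem' with ⟨h1, -⟩ | ⟨h1, -⟩
      · exact G.graph.not_isDiag_of_mem_edgeSet h1
      · exact G'.graph.not_isDiag_of_mem_edgeSet h1
    have hne : es ≠ [] := by
      intro h
      rw [h] at hlen
      simp at hlen
      omega
    have hfold : es.foldl toggle G = G' :=
      foldl_toggle_eq es G G' hdiag hnd (Set.ext fun x => hmem x) hlab
    obtain ⟨l, hl⟩ := chain_run (N := N) (K := K) ρ hcomm hk es hne hdiag G u
      (by rw [hlen]; exact hu)
    rw [hfold, hlen] at hl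
    exact ⟨l, hl⟩

/-- Remaining repeated reconfigurations from step `j` on. -/
noncomputable def rem (ρ : Execution V P n) (j : ℕ) : ℕ :=
  ∑ i ∈ (Finset.Ico j n).filter (fun i => ρ.ty i = StepType.reconf),
    (dist (ρ.cfg i) (ρ.cfg (i + 1)) - 1)

lemma rem_succ (ρ : Execution V P n) {j : ℕ} (hj : j < n) :
    rem ρ j = (if ρ.ty j = StepType.reconf then dist (ρ.cfg j) (ρ.cfg (j + 1)) - 1 else 0)
      + rem ρ (j + 1) := by
  rw [rem, rem, ← Finset.insert_Ico_add_one_left_eq_Ico hj, Finset.filter_insert]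
  split_ifs with h
  · rw [Finset.sum_insert (by simp)]
  · rw [Nat.zero_add]

lemma rem_of_ge (ρ : Execution V P n) {j : ℕ} (hj : n ≤ j) : rem ρ j = 0 := by
  rw [rem, Finset.Ico_eq_empty (by omega), Finset.filter_empty, Finset.sum_empty]

lemma kappa_eq_rem (ρ : Execution V P n) (hn : 1 ≤ n) (hty0 : ρ.ty 0 = .comm) :
    ρ.kappa = rem ρ 1 := by
  rw [Execution.kappa, Finset.range_eq_Ico, ← rem,
    rem_succ ρ (by omega), if_neg (by simp [hty0]), Nat.zero_add]

/-- Simulation of the suffix of `ρ` starting at `G_j`, on main copy `k`. -/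
lemma segment {N K : ℕ} (ρ : Execution V P n)
    (hcomm : CommStep P (ρ.cfg (n - 1)) (ρ.cfg n))
    (htyalt : ∀ j, j + 1 < n → ρ.ty (j + 1) = sflip (ρ.ty j))
    (htylast : ρ.ty (n - 1) = .comm) {k : ℕ} (hk : k < N) :
    ∀ m j, j + m = n → j < n → ∀ u, u + rem ρ j ≤ K →
      ∃ l, Steps P (ρ.ty j) .comm (bigCfg (st ρ N K k u (ρ.cfg j)))
        (bigCfg (st ρ N K k (u + rem ρ j) (ρ.cfg n))) l := by
  intro m
  induction m with
  | zero => intro j hj hlt; omega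
  | succ m ih =>
    intro j hj hlt u hu
    by_cases hcase : j = n - 1
    · have htyj : ρ.ty j = .comm := by rw [hcase]; exact htylast
      have hremj : rem ρ j = 0 := by
        rw [rem_succ ρ hlt, if_neg (by simp [htyj]), Nat.zero_add, rem_of_ge ρ (by omega)]
      have hstep : CommStep P (ρ.cfg j) (ρ.cfg n) := by
        have := ρ.step_comm j hlt htyj
        rwa [show j + 1 = n by omega] at this
      rw [htyj, hremj, Nat.add_zero, ← st_update_main ρ K k u (ρ.cfg j) (ρ.cfg n) hk]
      exact ⟨_, Steps.single (okComm (commStep_bigCfg (st_main ρ K k u (ρ.cfg j) hk) hstep))⟩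
    · have hj1 : j + 1 < n := by omega
      have htynext : ρ.ty (j + 1) = sflip (ρ.ty j) := htyalt j hj1
      by_cases hty : ρ.ty j = .comm
      · have hrem : rem ρ j = rem ρ (j + 1) := by
          rw [rem_succ ρ hlt, if_neg (by simp [hty]), Nat.zero_add]
        rw [hrem] at hu
        obtain ⟨l, hl⟩ := ih (j + 1) (by omega) hj1 u hu
        rw [htynext, hty] at hl
        have hok : Ok P .comm (bigCfg (st ρ N K k u (ρ.cfg j)))
            (bigCfg (st ρ N K k u (ρ.cfg (j + 1)))) := by
          rw [← st_update_main ρ K k u (ρ.cfg j) (ρ.cfg (j + 1)) hk]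
          exact okComm (commStep_bigCfg (st_main ρ K k u (ρ.cfg j) hk) (ρ.step_comm j hlt hty))
        rw [hty, hrem]
        exact ⟨_, Steps.cons hok hl⟩
      · have hty' : ρ.ty j = .reconf := by
          have h := eq_sflip_of_ne hty
          simpa [sflip] using h
        have hrec : ReconfStep (ρ.cfg j) (ρ.cfg (j + 1)) := ρ.step_reconf j hlt hty'
        have hrem : rem ρ j = (dist (ρ.cfg j) (ρ.cfg (j + 1)) - 1) + rem ρ (j + 1) := by
          rw [rem_succ ρ hlt, if_pos hty']
        obtain ⟨l₁, hl₁⟩ := reconf_block (N := N) (K := K) ρ hcomm hk (ρ.cfg j) (ρ.cfg (j + 1))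
          hrec u (by omega)
        obtain ⟨l₂, hl₂⟩ := ih (j + 1) (by omega) hj1 (u + (dist (ρ.cfg j) (ρ.cfg (j + 1)) - 1))
          (by omega)
        rw [htynext, hty'] at hl₂
        obtain ⟨l, hl⟩ := hl₁.append hl₂
        rw [show u + (dist (ρ.cfg j) (ρ.cfg (j + 1)) - 1) + rem ρ (j + 1) = u + rem ρ j
          by omega] at hl
        rw [hty']
        exact ⟨l, hl⟩

end Main

section Final

variable {Q M V : Type} {P : BroadcastProtocol Q M} {n : ℕ}

lemma assemble {N K : ℕ} (ρ : Execution V P n)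
    (hcomm : CommStep P (ρ.cfg (n - 1)) (ρ.cfg n))
    (htyalt : ∀ j, j + 1 < n → ρ.ty (j + 1) = sflip (ρ.ty j))
    (htylast : ρ.ty (n - 1) = .comm) (hty1 : ρ.ty 1 = .reconf) (hn : 1 < n)
    (hKbound : rem ρ 1 * N ≤ K) :
    ∀ k, 1 ≤ k → k ≤ N →
      ∃ l, Steps P .reconf .comm (bigCfg (st ρ N K 0 0 (ρ.cfg 1)))
        (bigCfg (st ρ N K k (rem ρ 1 * k) (ρ.cfg 1))) l := by
  have copyseg : ∀ k, k < N → ∀ u, u + rem ρ 1 ≤ K →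
      ∃ l, Steps P .reconf .comm (bigCfg (st ρ N K k u (ρ.cfg 1)))
        (bigCfg (st ρ N K (k + 1) (u + rem ρ 1) (ρ.cfg 1))) l := by
    intro k hk u hu
    obtain ⟨l, hl⟩ := segment (N := N) (K := K) ρ hcomm htyalt htylast hk (n - 1) 1
      (by omega) hn u hu
    rw [hty1, st_succ_main] at hl
    exact ⟨l, hl⟩
  intro k
  induction k with
  | zero => omega
  | succ k ih =>
    intro _ hkN
    by_cases hk0 : k = 0
    · subst hk0
      obtain ⟨l, hl⟩ := copyseg 0 (by omega) 0 (by
        have : rem ρ 1 * 1 ≤ rem ρ 1 * N := Nat.mul_le_mul_left _ (by omega)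
        omega)
      rw [show (0 : ℕ) + rem ρ 1 = rem ρ 1 * 1 by omega] at hl
      exact ⟨l, hl⟩
    · obtain ⟨l₁, hl₁⟩ := ih (by omega) (by omega)
      obtain ⟨l₂, hl₂⟩ := copyseg k (by omega) (rem ρ 1 * k) (by
        have : rem ρ 1 * (k + 1) ≤ rem ρ 1 * N := Nat.mul_le_mul_left _ hkN
        have h2 : rem ρ 1 * (k + 1) = rem ρ 1 * k + rem ρ 1 := by ring
        omega)
      rw [show rem ρ 1 * k + rem ρ 1 = rem ρ 1 * (k + 1) by ring] at hl₂
      exact hl₁.append hl₂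

end Final

/-- Lemma on the final phase.
For every `1`-balanced execution `ρ = (G_i)_{0 ≤ i ≤ n}` with `κ = κ(ρ)` its total
number of repeated atomic reconfigurations, and every `N`, there is a `1`-constrained
execution from `G_1^N ⊕ G_{n-1}^{κN}` to `G_n^{N + κN}`. -/
theorem end_phase_lemma {n : ℕ} (ρ : Execution V P n) (hbal : ρ.Balanced 1)
    (κ : ℕ) (hκ : κ = ρ.kappa) :
    ∀ N : ℕ,
      ∃ (r' : ℕ) (ρ' : Execution ((V × Fin N) ⊕ (V × Fin (κ * N))) P r'),
        ρ'.KConstrained 1 ∧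
        ρ'.cfg 0 = Config.juxt ((ρ.cfg 1).pow N) ((ρ.cfg (n - 1)).pow (κ * N)) ∧
        ρ'.cfg r' = Config.rename
          (((Equiv.refl V).prodCongr finSumFinEquiv.symm).trans
            (Equiv.prodSumDistrib V (Fin N) (Fin (κ * N))))
          ((ρ.cfg n).pow (N + κ * N)) := by
  obtain ⟨hn, hty0, htylast, -⟩ := hbal
  intro N
  have hinit : Config.juxt ((ρ.cfg 1).pow N) ((ρ.cfg (n - 1)).pow (κ * N)) =
      bigCfg (fun c : Fin N ⊕ Fin (κ * N) =>
        Sum.elim (fun _ : Fin N => ρ.cfg 1) (fun _ : Fin (κ * N) => ρ.cfg (n - 1)) c) :=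
    (bigCfg_elim_eq_juxt _ _).symm
  have hfinal : Config.rename
      (((Equiv.refl V).prodCongr finSumFinEquiv.symm).trans
        (Equiv.prodSumDistrib V (Fin N) (Fin (κ * N))))
      ((ρ.cfg n).pow (N + κ * N)) =
      bigCfg (fun _ : Fin N ⊕ Fin (κ * N) => ρ.cfg n) :=
    (bigCfg_const_eq_rename _).symm
  have hκ0 : n = 1 → κ = 0 := by
    intro h1
    rw [hκ, Execution.kappa]
    subst h1
    rw [Finset.range_one]
    have : Finset.filter (fun i => ρ.ty i = StepType.reconf) {0} = ∅ := by
      rw [Finset.filter_singleton, if_neg (by simp [hty0])]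
    rw [this, Finset.sum_empty]
  by_cases hdeg : N = 0 ∨ n = 1
  · -- degenerate cases: the two target configurations coincide, take the empty execution
    have hconst : bigCfg (fun c : Fin N ⊕ Fin (κ * N) =>
        Sum.elim (fun _ : Fin N => ρ.cfg 1) (fun _ : Fin (κ * N) => ρ.cfg (n - 1)) c) =
        bigCfg (fun _ : Fin N ⊕ Fin (κ * N) => ρ.cfg n) := by
      apply bigCfg_congr
      intro w
      rcases w with ⟨v, i⟩ | ⟨v, t⟩
      · rcases hdeg with h | h
        · exact absurd i.2 (by omega)
        · show ρ.cfg 1 = ρ.cfg n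
          exact (congrArg ρ.cfg h).symm
      · rcases hdeg with h | h
        · have hz : κ * N = 0 := by rw [h, Nat.mul_zero]
          exact absurd t.2 (by omega)
        · have hz : κ * N = 0 := by rw [hκ0 h, Nat.zero_mul]
          exact absurd t.2 (by omega)
    refine ⟨0,
      { cfg := fun _ => bigCfg (fun c : Fin N ⊕ Fin (κ * N) =>
          Sum.elim (fun _ : Fin N => ρ.cfg 1) (fun _ : Fin (κ * N) => ρ.cfg (n - 1)) c)
        ty := fun _ => .comm
        step_comm := fun i hi => absurd hi (Nat.not_lt_zero i)
        step_reconf := fun i hi => absurd hi (Nat.not_lt_zero i)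
        alternate := fun i hi => absurd hi (Nat.not_lt_zero (i + 1)) }, ?_, ?_, ?_⟩
    · intro i hi
      exact absurd hi (Nat.not_lt_zero i)
    · rw [hinit]
    · rw [hfinal, ← hconst]
  · push_neg at hdeg
    obtain ⟨hN, hn1⟩ := hdeg
    have hn2 : 1 < n := by omega
    have htyalt : ∀ j, j + 1 < n → ρ.ty (j + 1) = sflip (ρ.ty j) :=
      fun j hj => eq_sflip_of_ne (ρ.alternate j hj)
    have hcomm : CommStep P (ρ.cfg (n - 1)) (ρ.cfg n) := by
      have := ρ.step_comm (n - 1) (by omega) htylast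
      rwa [show n - 1 + 1 = n by omega] at this
    have hty1 : ρ.ty 1 = .reconf := by
      have := htyalt 0 (by omega)
      rw [hty0] at this
      exact this
    have hκrem : κ = rem ρ 1 := by rw [hκ]; exact kappa_eq_rem ρ hn hty0
    obtain ⟨l, hl⟩ := assemble (N := N) (K := κ * N) ρ hcomm htyalt htylast hty1 hn2
      (Nat.le_of_eq (congrArg (fun x => x * N) hκrem.symm)) N (by omega) (le_refl N)
    have hstart : bigCfg (st ρ N (κ * N) 0 0 (ρ.cfg 1)) =
        bigCfg (fun c : Fin N ⊕ Fin (κ * N) =>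
          Sum.elim (fun _ : Fin N => ρ.cfg 1) (fun _ : Fin (κ * N) => ρ.cfg (n - 1)) c) := by
      apply bigCfg_congr
      intro w
      rcases w with ⟨v, i⟩ | ⟨v, t⟩ <;> simp [st, idx]
    have hend : bigCfg (st ρ N (κ * N) N (rem ρ 1 * N) (ρ.cfg 1)) =
        bigCfg (fun _ : Fin N ⊕ Fin (κ * N) => ρ.cfg n) := by
      apply bigCfg_congr
      intro w
      rcases w with ⟨v, i⟩ | ⟨v, t⟩
      · simp [st, idx, i.isLt]
      · have h := t.2
        simp [st, idx, ← hκrem, h]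
    rw [hstart, hend] at hl
    obtain ⟨r', ρ', hcon, h0, hr⟩ := hl.toExecution
    exact ⟨r', ρ', hcon, by rw [h0, hinit], by rw [hr, hfinal]⟩

end RBN
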